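/- Let K be a finite index set, C > 0, d : K → ℂ with Re d_k ≥ 0, Im d_k ≥ 0 and |d_k| ≤ C for every k ∈ K, and v : K → ℝ with v_k > 0 for every k. Define OPT₁ as the maximum of Σ_{k∈S₁} v_k over all S₁ ⊆ K with Re(Σ_{k∈S₁} d_k) + Im(Σ_{k∈S₁} d_k) ≤ C, and define V₂ as the maximum of v_k over all k ∈ K with Re d_k + Im d_k > C (with V₂ = 0 if no such k exists). Let ρ be a real with 0 < ρ ≤ 1, and let A ⊆ K satisfy Re(Σ_{k∈A} d_k) + Im(Σ_{k∈A} d_k) ≤ C and Σ_{k∈A} v_k ≥ ρ · OPT₁. Then for every S ⊆ K with |Σ_{k∈S} d_k| ≤ C, one has max(Σ_{k∈A} v_k, V₂) ≥ (ρ/2) · Σ_{k∈S} v_k. -/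

import Mathlib

/-- Combinatorial content of Theorem 2: if `A` is a `ρ`-approximate solution
for the subproblem with feasible region `D₁`, then the better of `A` and the
best single item in `D₂` is a `(ρ/2)`-approximation for C-KP. -/
theorem ckp_half_rho_approx {K : Type*} [Fintype K] (C : ℝ) (hC : 0 < C)
    (d : K → ℂ) (hre : ∀ k, 0 ≤ (d k).re) (him : ∀ k, 0 ≤ (d k).im)
    (hmag : ∀ k, ‖d k‖ ≤ C)
    (v : K → ℝ) (hv : ∀ k, 0 < v k)
    (OPT₁ V₂ : ℝ)
    (hOPT₁ : OPT₁ = sSup {x : ℝ | ∃ S₁ : Finset K,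
      (∑ k ∈ S₁, d k).re + (∑ k ∈ S₁, d k).im ≤ C ∧ x = ∑ k ∈ S₁, v k})
    (hV₂ : V₂ = sSup (insert 0 {x : ℝ | ∃ k : K, C < (d k).re + (d k).im ∧ x = v k}))
    (ρ : ℝ) (hρ0 : 0 < ρ) (hρ1 : ρ ≤ 1)
    (A : Finset K)
    (hA_feas : (∑ k ∈ A, d k).re + (∑ k ∈ A, d k).im ≤ C)
    (hA_apx : ρ * OPT₁ ≤ ∑ k ∈ A, v k)
    (S : Finset K) (hS : ‖∑ k ∈ S, d k‖ ≤ C) :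
    (ρ / 2) * ∑ k ∈ S, v k ≤ max (∑ k ∈ A, v k) V₂ := by
  classical
  set w : K → ℝ := fun k => (d k).re + (d k).im with hwdef
  have hw0 : ∀ k, 0 ≤ w k := fun k => add_nonneg (hre k) (him k)
  have hsumw : ∀ T : Finset K, ∑ k ∈ T, w k = (∑ k ∈ T, d k).re + (∑ k ∈ T, d k).im := by
    intro T
    simp [hwdef, Complex.re_sum, Complex.im_sum, Finset.sum_add_distrib]
  -- sqrt 2 facts
  have hs0 : (0:ℝ) ≤ Real.sqrt 2 := Real.sqrt_nonneg 2
  have hs2 : (Real.sqrt 2) ^ 2 = 2 := Real.sq_sqrt (by norm_num)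
  have hs15 : Real.sqrt 2 ≤ 1.5 := by nlinarith
  have hsC : Real.sqrt 2 * C ≤ 1.5 * C := mul_le_mul_of_nonneg_right hs15 hC.le
  -- w(S) ≤ √2 C
  have hwS : ∑ k ∈ S, w k ≤ Real.sqrt 2 * C := by
    rw [hsumw]
    set a := (∑ k ∈ S, d k).re
    set b := (∑ k ∈ S, d k).im
    have ha : 0 ≤ a := by
      rw [show a = ∑ k ∈ S, (d k).re from Complex.re_sum S d]
      exact Finset.sum_nonneg (fun k _ => hre k)
    have hb : 0 ≤ b := by
      rw [show b = ∑ k ∈ S, (d k).im from Complex.im_sum S d]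
      exact Finset.sum_nonneg (fun k _ => him k)
    have hA2 : (‖∑ k ∈ S, d k‖) ^ 2 = a ^ 2 + b ^ 2 := by
      rw [Complex.sq_norm, Complex.normSq_apply]; ring
    have hA0 : 0 ≤ ‖∑ k ∈ S, d k‖ := norm_nonneg _
    have h1 : a + b ≤ Real.sqrt 2 * ‖∑ k ∈ S, d k‖ := by
      set A := ‖∑ k ∈ S, d k‖ with hAdef
      nlinarith [sq_nonneg (a - b), mul_nonneg hs0 hA0, sq_nonneg (a + b - Real.sqrt 2 * A)]
    calc a + b ≤ Real.sqrt 2 * ‖∑ k ∈ S, d k‖ := h1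
      _ ≤ Real.sqrt 2 * C := by
          exact mul_le_mul_of_nonneg_left hS hs0
  -- OPT₁ facts
  have hT1fin : ({x : ℝ | ∃ S₁ : Finset K,
      (∑ k ∈ S₁, d k).re + (∑ k ∈ S₁, d k).im ≤ C ∧ x = ∑ k ∈ S₁, v k}).Finite := by
    apply Set.Finite.subset (Set.finite_range (fun S₁ : Finset K => ∑ k ∈ S₁, v k))
    rintro x ⟨S₁, _, rfl⟩
    exact ⟨S₁, rfl⟩
  have hOPTge : ∀ T : Finset K, (∑ k ∈ T, d k).re + (∑ k ∈ T, d k).im ≤ C →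
      ∑ k ∈ T, v k ≤ OPT₁ := by
    intro T hT
    rw [hOPT₁]
    exact le_csSup hT1fin.bddAbove ⟨T, hT, rfl⟩
  -- V₂ facts
  have hV2fin : (insert (0:ℝ) {x : ℝ | ∃ k : K, C < (d k).re + (d k).im ∧ x = v k}).Finite := by
    apply Set.Finite.insert
    apply Set.Finite.subset (Set.finite_range v)
    rintro x ⟨k, _, rfl⟩
    exact ⟨k, rfl⟩
  have hV2_0 : 0 ≤ V₂ := by
    rw [hV₂]; exact le_csSup hV2fin.bddAbove (Set.mem_insert 0 _)
  have hV2ge : ∀ k : K, C < w k → v k ≤ V₂ := by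
    intro k hk
    rw [hV₂]
    exact le_csSup hV2fin.bddAbove (Set.mem_insert_of_mem _ ⟨k, hk, rfl⟩)
  have hOPT0 : 0 ≤ OPT₁ := by
    have := hOPTge ∅ (by simp [hC.le])
    simpa using this
  -- main claim : v(S) ≤ 2 * max OPT₁ V₂
  have hmain : ∑ k ∈ S, v k ≤ 2 * max OPT₁ V₂ := by
    by_cases hbig : ∃ k ∈ S, C < w k
    · -- one big item
      obtain ⟨k₂, hk₂S, hk₂⟩ := hbig
      have herase : ∑ k ∈ S.erase k₂, w k ≤ C := by
        have h1 : w k₂ + ∑ k ∈ S.erase k₂, w k = ∑ k ∈ S, w k :=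
          Finset.add_sum_erase S w hk₂S
        linarith [hwS, hsC]
      have h2 : ∑ k ∈ S.erase k₂, v k ≤ OPT₁ := by
        apply hOPTge
        rw [← hsumw]; exact herase
      have h3 : v k₂ ≤ V₂ := hV2ge k₂ hk₂
      have h4 : v k₂ + ∑ k ∈ S.erase k₂, v k = ∑ k ∈ S, v k :=
        Finset.add_sum_erase S v hk₂S
      have := le_max_left OPT₁ V₂
      have := le_max_right OPT₁ V₂
      linarith
    · push_neg at hbig
      -- all items small; take maximal feasible subset P of S
      set F := S.powerset.filter (fun P : Finset K => ∑ k ∈ P, w k ≤ C) with hF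
      have hFne : F.Nonempty := ⟨∅, by simp [hF, hC.le]⟩
      obtain ⟨P, hPF, hmax⟩ : ∃ P ∈ F, ∀ x ∈ F, ¬ P < x := by
        obtain ⟨P, hP⟩ := Finset.exists_maximal hFne
        exact ⟨P, hP.1, fun x hx hlt => lt_irrefl P (lt_of_lt_of_le hlt (hP.2 hx hlt.le))⟩
      rw [hF, Finset.mem_filter, Finset.mem_powerset] at hPF
      obtain ⟨hPS, hPw⟩ := hPF
      have hout : ∀ j ∈ S \ P, C < ∑ k ∈ P, w k + w j := by
        intro j hj
        rw [Finset.mem_sdiff] at hj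
        by_contra hle
        push_neg at hle
        have hjP : j ∉ P := hj.2
        have h1 : insert j P ∈ F := by
          rw [hF, Finset.mem_filter, Finset.mem_powerset]
          constructor
          · exact Finset.insert_subset hj.1 hPS
          · rw [Finset.sum_insert hjP]; linarith
        exact hmax _ h1 (Finset.ssubset_insert hjP)
      -- w(S \ P) ≤ C
      have hQw : ∑ k ∈ S \ P, w k ≤ C := by
        have hsplit : ∑ k ∈ S \ P, w k + ∑ k ∈ P, w k = ∑ k ∈ S, w k :=
          Finset.sum_sdiff hPS
        by_cases hcard : 1 < (S \ P).card
        · obtain ⟨j₁, hj₁, j₂, hj₂, hne⟩ := Finset.one_lt_card.mp hcard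
          have hb1 := hout j₁ hj₁
          have hb2 := hout j₂ hj₂
          have hpair : w j₁ + w j₂ ≤ ∑ k ∈ S \ P, w k := by
            rw [← Finset.sum_pair hne]
            apply Finset.sum_le_sum_of_subset_of_nonneg
            · intro x hx
              simp only [Finset.mem_insert, Finset.mem_singleton] at hx
              rcases hx with rfl | rfl
              · exact hj₁
              · exact hj₂
            · intro k _ _; exact hw0 k
          linarith [hwS, hsC]
        · push_neg at hcard
          rcases Finset.eq_empty_or_nonempty (S \ P) with he | ⟨j, hj⟩
          · rw [he]; simpa using hC.le
          · have : S \ P = {j} := Finset.eq_singleton_iff_nonempty_unique_mem.mpr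
              ⟨⟨j, hj⟩, fun x hx => by
                by_contra hxj
                exact absurd (Finset.one_lt_card.mpr ⟨x, hx, j, hj, hxj⟩) (not_lt.mpr hcard)⟩
            rw [this, Finset.sum_singleton]
            exact hbig j (Finset.mem_sdiff.mp hj).1
      have hP_opt : ∑ k ∈ P, v k ≤ OPT₁ := hOPTge P (by rw [← hsumw]; exact hPw)
      have hQ_opt : ∑ k ∈ S \ P, v k ≤ OPT₁ := hOPTge _ (by rw [← hsumw]; exact hQw)
      have hsplitv : ∑ k ∈ S \ P, v k + ∑ k ∈ P, v k = ∑ k ∈ S, v k :=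
        Finset.sum_sdiff hPS
      have := le_max_left OPT₁ V₂
      linarith
  -- finish
  have hvS0 : 0 ≤ ∑ k ∈ S, v k := Finset.sum_nonneg (fun k _ => (hv k).le)
  have hstep : ρ * max OPT₁ V₂ ≤ max (∑ k ∈ A, v k) V₂ := by
    rcases max_cases OPT₁ V₂ with ⟨heq, _⟩ | ⟨heq, _⟩
    · rw [heq]
      exact le_trans hA_apx (le_max_left _ _)
    · rw [heq]
      calc ρ * V₂ ≤ 1 * V₂ := mul_le_mul_of_nonneg_right hρ1 hV2_0
        _ = V₂ := one_mul V₂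
        _ ≤ max (∑ k ∈ A, v k) V₂ := le_max_right _ _
  calc (ρ / 2) * ∑ k ∈ S, v k ≤ (ρ / 2) * (2 * max OPT₁ V₂) := by
        apply mul_le_mul_of_nonneg_left hmain (by linarith)
    _ = ρ * max OPT₁ V₂ := by ring
    _ ≤ max (∑ k ∈ A, v k) V₂ := hstep
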